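/- Let k ≥ 2 and N ≥ 2k - 1, and let τ: {0,1}* -> {0,1,#}* be the N-uniform substitution τ(0) = # 0^{k-2} 0^{N-2k+2} 0^{k-1} and τ(1) = # 0^{k-2} 1^{N-2k+2} 0^{k-1}. If u_0 ... u_{e-1} is an abelian power occurring in an infinite binary word w, then τ(u_0) ... τ(u_{e-1}) is a k-abelian power occurring in τ(w). -/

import Mathlib

/-- Abelian equivalence of words: each letter occurs equally often. -/
def AbEq {A : Type*} [DecidableEq A] (u v : List A) : Prop :=
  ∀ a : A, u.count a = v.count a

/-- `u` occurs as a (contiguous) factor of the infinite word `x`. -/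
def OccursIn {A : Type*} (x : ℕ → A) (u : List A) : Prop :=
  ∃ i, u = (List.range u.length).map fun j => x (i + j)

/-- The number of (possibly overlapping) occurrences of `z` as a factor of `u`. -/
def FactorCount {A : Type*} [DecidableEq A] (u z : List A) : ℕ :=
  (List.range (u.length + 1 - z.length)).countP fun i =>
    decide ((u.drop i).take z.length = z)

/-- `k`-abelian equivalence: every nonempty word of length at most `k` occurs
equally often as a factor of `u` and of `v`. -/
def KAbEq {A : Type*} [DecidableEq A] (k : ℕ) (u v : List A) : Prop :=
  ∀ z : List A, z ≠ [] → z.length ≤ k → FactorCount u z = FactorCount v z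

/-- The `N`-uniform substitution `τ(0) = # 0^{k-2} 0^{N-2k+2} 0^{k-1}`,
`τ(1) = # 0^{k-2} 1^{N-2k+2} 0^{k-1}`, with `# = 2` in `Fin 3`. -/
def tauLetter (k N : ℕ) (a : Fin 2) : List (Fin 3) :=
  if a = 0 then
    (2 : Fin 3) :: (List.replicate (k - 2) 0 ++ List.replicate (N + 2 - 2 * k) 0
      ++ List.replicate (k - 1) 0)
  else
    (2 : Fin 3) :: (List.replicate (k - 2) 0 ++ List.replicate (N + 2 - 2 * k) 1
      ++ List.replicate (k - 1) 0)

/-- `τ` extended to finite binary words as a monoid morphism. -/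
def tauStar (k N : ℕ) (x : List (Fin 2)) : List (Fin 3) :=
  (x.map (tauLetter k N)).flatten

/-- `τ(w)`, applying `τ` letterwise to the infinite binary word `w`. -/
def tauWord (k N : ℕ) (w : ℕ → Fin 2) (n : ℕ) : Fin 3 :=
  (tauLetter k N (w (n / N))).getD (n % N) 0

section Splits

variable {A : Type*} [DecidableEq A]

lemma fc_split1 (s t z : List A) (hz : z ≠ []) (ht : z.length - 1 ≤ t.length) :
    FactorCount (s ++ t) z
      = FactorCount (s ++ t.take (z.length - 1)) z + FactorCount t z := by
  have hn : 1 ≤ z.length := List.length_pos_iff.mpr hz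
  unfold FactorCount
  have h1 : (s ++ t).length + 1 - z.length = s.length + (t.length + 1 - z.length) := by
    simp; omega
  rw [h1, List.range_add, List.countP_append]
  congr 1
  · have h2 : (s ++ t.take (z.length - 1)).length + 1 - z.length = s.length := by
      simp; omega
    rw [h2]
    refine List.countP_congr fun i hi => ?_
    simp only [List.mem_range] at hi
    have key : ((s ++ t).drop i).take z.length
        = ((s ++ t.take (z.length - 1)).drop i).take z.length := by
      rw [List.drop_append_of_le_length (Nat.le_of_lt hi),
          List.drop_append_of_le_length (Nat.le_of_lt hi),
          List.take_append, List.take_append,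
          List.take_take]
      congr 1
      rw [List.length_drop, Nat.min_eq_left (by omega)]
    simp [key]
  · rw [List.countP_map]
    refine List.countP_congr fun i hi => ?_
    have key : (s ++ t).drop (s.length + i) = t.drop i := List.drop_length_add_append i
    simp [Function.comp, key]

lemma fc_split2 (s t z : List A) (hz : z ≠ []) (hs : z.length - 1 ≤ s.length)
    (ht : t.length ≤ z.length - 1) :
    FactorCount (s ++ t) z = FactorCount s z
      + FactorCount (s.drop (s.length - (z.length - 1)) ++ t) z := by
  have hn : 1 ≤ z.length := List.length_pos_iff.mpr hz
  unfold FactorCount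
  have h1 : (s ++ t).length + 1 - z.length = (s.length + 1 - z.length) + t.length := by
    simp; omega
  rw [h1, List.range_add, List.countP_append]
  congr 1
  · refine List.countP_congr fun i hi => ?_
    simp only [List.mem_range] at hi
    have key : ((s ++ t).drop i).take z.length = (s.drop i).take z.length := by
      rw [List.drop_append_of_le_length (by omega),
          List.take_append_of_le_length (by rw [List.length_drop]; omega)]
    simp [key]
  · have h2 : (s.drop (s.length - (z.length - 1)) ++ t).length + 1 - z.length = t.length := by
      simp; omega
    rw [h2, List.countP_map]
    refine List.countP_congr fun i hi => ?_
    have key : (s.drop (s.length - (z.length - 1)) ++ t).drop i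
        = (s ++ t).drop ((s.length + 1 - z.length) + i) := by
      have h3 : s.drop (s.length - (z.length - 1)) ++ t
          = (s ++ t).drop (s.length - (z.length - 1)) :=
        (List.drop_append_of_le_length (by omega)).symm
      rw [h3, List.drop_drop]
      congr 1
      omega
    simp [Function.comp, key]

end Splits

section TauLemmas

lemma tauLetter_length {k N : ℕ} (hk : 2 ≤ k) (hN : 2 * k - 1 ≤ N) (a : Fin 2) :
    (tauLetter k N a).length = N := by
  unfold tauLetter; split <;> simp <;> omega

lemma tauLetter_take {k N : ℕ} (hk : 2 ≤ k) (a : Fin 2) {j : ℕ} (hj : j ≤ k - 1) :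
    (tauLetter k N a).take j = ((2 : Fin 3) :: List.replicate (k - 2) 0).take j := by
  have h : ∀ c : Fin 3,
      ((2 : Fin 3) :: (List.replicate (k - 2) (0 : Fin 3)
        ++ List.replicate (N + 2 - 2 * k) c ++ List.replicate (k - 1) 0)).take j
      = ((2 : Fin 3) :: List.replicate (k - 2) 0).take j := by
    intro c
    cases j with
    | zero => simp
    | succ j =>
      simp only [List.take_succ_cons]
      congr 1
      rw [List.append_assoc, List.take_append_of_le_length (by simp; omega)]
  unfold tauLetter; split <;> exact h _

lemma tauLetter_drop {k N : ℕ} (hk : 2 ≤ k) (hN : 2 * k - 1 ≤ N) (a : Fin 2) {j : ℕ}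
    (hj : j ≤ k - 1) :
    (tauLetter k N a).drop (N - j) = List.replicate j 0 := by
  have h : ∀ c : Fin 3,
      ((2 : Fin 3) :: (List.replicate (k - 2) (0 : Fin 3)
        ++ List.replicate (N + 2 - 2 * k) c ++ List.replicate (k - 1) 0)).drop (N - j)
      = List.replicate j 0 := by
    intro c
    have h0 : (2 : Fin 3) :: (List.replicate (k - 2) (0 : Fin 3)
        ++ List.replicate (N + 2 - 2 * k) c ++ List.replicate (k - 1) 0)
        = ((2 : Fin 3) :: (List.replicate (k - 2) (0 : Fin 3)
          ++ List.replicate (N + 2 - 2 * k) c)) ++ List.replicate (k - 1) 0 := by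
      simp
    rw [h0]
    have hlen : ((2 : Fin 3) :: (List.replicate (k - 2) (0 : Fin 3)
        ++ List.replicate (N + 2 - 2 * k) c)).length = N - (k - 1) := by
      simp; omega
    have harith : N - j = ((2 : Fin 3) :: (List.replicate (k - 2) (0 : Fin 3)
        ++ List.replicate (N + 2 - 2 * k) c)).length + (k - 1 - j) := by
      rw [hlen]; omega
    rw [harith, List.drop_length_add_append, List.drop_replicate]
    congr 1
    omega
  unfold tauLetter; split <;> exact h _

lemma tauStar_cons (k N : ℕ) (a : Fin 2) (x : List (Fin 2)) :
    tauStar k N (a :: x) = tauLetter k N a ++ tauStar k N x := by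
  simp [tauStar]

lemma tauStar_length {k N : ℕ} (hk : 2 ≤ k) (hN : 2 * k - 1 ≤ N) (x : List (Fin 2)) :
    (tauStar k N x).length = N * x.length := by
  induction x with
  | nil => simp [tauStar]
  | cons a x ih =>
    rw [tauStar_cons]
    simp [tauLetter_length hk hN, ih]
    ring

lemma tauStar_take {k N : ℕ} (hk : 2 ≤ k) (hN : 2 * k - 1 ≤ N) {x : List (Fin 2)}
    (hx : x ≠ []) {j : ℕ} (hj : j ≤ k - 1) :
    (tauStar k N x).take j = (tauLetter k N 0).take j := by
  cases x with
  | nil => exact absurd rfl hx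
  | cons a x =>
    rw [tauStar_cons,
        List.take_append_of_le_length (by rw [tauLetter_length hk hN]; omega),
        tauLetter_take hk a hj, ← tauLetter_take hk 0 hj]

lemma tauStar_append (k N : ℕ) (x y : List (Fin 2)) :
    tauStar k N (x ++ y) = tauStar k N x ++ tauStar k N y := by
  simp [tauStar]

lemma tauStar_flatten (k N : ℕ) (l : List (List (Fin 2))) :
    tauStar k N l.flatten = (l.map (tauStar k N)).flatten := by
  induction l with
  | nil => simp [tauStar]
  | cons a l ih => simp only [List.flatten_cons, List.map_cons, tauStar_append, ih]

end TauLemmas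

section Formula

lemma fc_step {k N : ℕ} (hk : 2 ≤ k) (hN : 2 * k - 1 ≤ N) (a : Fin 2)
    {x : List (Fin 2)} (hx : x ≠ []) {z : List (Fin 3)} (hz : z ≠ []) (hzk : z.length ≤ k) :
    FactorCount (tauStar k N (a :: x)) z =
      FactorCount (tauLetter k N a) z
      + FactorCount (List.replicate (z.length - 1) (0 : Fin 3)
          ++ (tauLetter k N 0).take (z.length - 1)) z
      + FactorCount (tauStar k N x) z := by
  have hn : 1 ≤ z.length := List.length_pos_iff.mpr hz
  have hxlen : 1 ≤ x.length := List.length_pos_iff.mpr hx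
  have ht : z.length - 1 ≤ (tauStar k N x).length := by
    rw [tauStar_length hk hN]
    calc z.length - 1 ≤ N := by omega
      _ = N * 1 := (Nat.mul_one N).symm
      _ ≤ N * x.length := Nat.mul_le_mul_left N hxlen
  rw [tauStar_cons, fc_split1 _ _ _ hz ht, tauStar_take hk hN hx (by omega)]
  rw [fc_split2 (tauLetter k N a) _ z hz
      (by rw [tauLetter_length hk hN]; omega) (by simp)]
  rw [tauLetter_length hk hN, tauLetter_drop hk hN a (by omega : z.length - 1 ≤ k - 1)]

lemma fc_formula {k N : ℕ} (hk : 2 ≤ k) (hN : 2 * k - 1 ≤ N) {z : List (Fin 3)}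
    (hz : z ≠ []) (hzk : z.length ≤ k) :
    ∀ x : List (Fin 2), x ≠ [] →
      FactorCount (tauStar k N x) z
        = (x.map fun a => FactorCount (tauLetter k N a) z).sum
          + (x.length - 1) * FactorCount (List.replicate (z.length - 1) (0 : Fin 3)
              ++ (tauLetter k N 0).take (z.length - 1)) z := by
  intro x
  induction x with
  | nil => intro h; exact absurd rfl h
  | cons a x ih =>
    intro _
    cases x with
    | nil => simp [tauStar]
    | cons b x' =>
      rw [fc_step hk hN a (List.cons_ne_nil b x') hz hzk, ih (List.cons_ne_nil b x')]
      simp [List.length_cons]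
      ring

lemma sum_map_fin2 (f : Fin 2 → ℕ) (x : List (Fin 2)) :
    (x.map f).sum = x.count 0 * f 0 + x.count 1 * f 1 := by
  induction x with
  | nil => simp
  | cons a x ih =>
    fin_cases a <;> simp [List.count_cons, ih] <;> ring

end Formula

section Occ

lemma tau_occ {k N : ℕ} (hk : 2 ≤ k) (hN : 2 * k - 1 ≤ N) (w : ℕ → Fin 2) :
    ∀ (v : List (Fin 2)) (i : ℕ), (∀ j (hj : j < v.length), v[j] = w (i + j)) →
      tauStar k N v = (List.range (N * v.length)).map fun j => tauWord k N w (i * N + j) := by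
  have hN0 : 0 < N := by omega
  intro v
  induction v with
  | nil => intro i _; simp [tauStar]
  | cons a v ih =>
    intro i h
    have ha : a = w i := by have h0 := h 0 (by simp); rw [List.getElem_cons_zero] at h0; exact h0
    have hv : ∀ j (hj : j < v.length), v[j] = w ((i + 1) + j) := by
      intro j hj
      have h2 := h (j + 1) (by simp; omega)
      rw [List.getElem_cons_succ] at h2
      rw [h2]; congr 1; omega
    rw [tauStar_cons, ih (i + 1) hv]
    have hNlen : N * (a :: v).length = N + N * v.length := by
      simp [List.length_cons]; ring
    rw [hNlen, List.range_add, List.map_append]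
    congr 1
    · rw [ha]
      refine List.ext_getElem (by simp [tauLetter_length hk hN]) fun n h1 h2 => ?_
      have hnN : n < N := by rw [tauLetter_length hk hN] at h1; exact h1
      simp only [List.getElem_map, List.getElem_range]
      unfold tauWord
      have hdiv : (i * N + n) / N = i := by
        rw [Nat.mul_comm, Nat.mul_add_div hN0, Nat.div_eq_of_lt hnN]
        omega
      have hmod : (i * N + n) % N = n := by
        rw [Nat.mul_comm, Nat.mul_add_mod]
        exact Nat.mod_eq_of_lt hnN
      rw [hdiv, hmod, List.getD_eq_getElem _ _ h1]
    · rw [List.map_map]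
      refine List.map_congr_left fun j _ => ?_
      simp only [Function.comp]
      congr 1
      ring

end Occ

/-- If `u_0 ⋯ u_{e-1}` is an abelian power occurring in the infinite binary word
`w`, then `τ(u_0) ⋯ τ(u_{e-1})` is a `k`-abelian power occurring in `τ(w)`. -/
theorem tau_image_of_abelian_power_is_kAbelian_power
    (k N : ℕ) (hk : 2 ≤ k) (hN : 2 * k - 1 ≤ N)
    (w : ℕ → Fin 2) (e m : ℕ) (he : 0 < e) (hm : 0 < m)
    (u : ℕ → List (Fin 2))
    (hlen : ∀ i < e, (u i).length = m)
    (hab : ∀ i < e, AbEq (u i) (u 0))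
    (hocc : OccursIn w (((List.range e).map u).flatten)) :
    (∀ i < e, (tauStar k N (u i)).length = N * m) ∧
    (∀ i < e, KAbEq k (tauStar k N (u i)) (tauStar k N (u 0))) ∧
    OccursIn (tauWord k N w) (((List.range e).map fun i => tauStar k N (u i)).flatten) := by
  have hne : ∀ i < e, u i ≠ [] := by
    intro i hi h
    have := hlen i hi
    rw [h] at this
    simp at this
    omega
  refine ⟨?_, ?_, ?_⟩
  · intro i hi
    rw [tauStar_length hk hN, hlen i hi]
  · intro i hi z hz hzk
    rw [fc_formula hk hN hz hzk (u i) (hne i hi),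
        fc_formula hk hN hz hzk (u 0) (hne 0 he),
        sum_map_fin2, sum_map_fin2, hab i hi 0, hab i hi 1, hlen i hi, hlen 0 he]
  · obtain ⟨i, hi⟩ := hocc
    refine ⟨i * N, ?_⟩
    have hflat : ((List.range e).map fun i => tauStar k N (u i)).flatten
        = tauStar k N (((List.range e).map u).flatten) := by
      rw [tauStar_flatten, List.map_map]
      rfl
    rw [hflat]
    set V := ((List.range e).map u).flatten with hV
    have hgood : ∀ j (hj : j < V.length), V[j] = w (i + j) := by
      intro j hj
      have e1 := List.getElem_of_eq hi hj
      simpa using e1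
    have hmain := tau_occ hk hN w V i hgood
    rw [tauStar_length hk hN]
    exact hmain
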